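/- Let N_1, …, N_K be independent real-valued random variables and let j1 ≠ j2 be two indices in {1,…,K} such that F_{N_{j1}}(x) ≤ F_{N_{j2}}(x) for all x ∈ ℝ. Then P[N_{j1} > max_{j ≠ j1} N_j] ≥ P[N_{j2} > max_{j ≠ j2} N_j]. -/

import Mathlib

open MeasureTheory ProbabilityTheory

open Set

lemma claimB {α β : Measure ℝ} (h : ∀ x, α (Iic x) ≤ β (Iic x)) (t : ℝ) :
    α (Iio t) ≤ β (Iio t) := by
  have hU : Iio t = ⋃ n : ℕ, Iic (t - ((n : ℝ) + 1)⁻¹) := by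
    ext x
    simp only [mem_Iio, mem_iUnion, mem_Iic]
    constructor
    · intro hx
      obtain ⟨n, hn⟩ := exists_nat_one_div_lt (sub_pos.mpr hx)
      rw [one_div] at hn
      exact ⟨n, by linarith⟩
    · rintro ⟨n, hn⟩
      have : (0 : ℝ) < ((n : ℝ) + 1)⁻¹ := by positivity
      linarith
  have hmono : Monotone fun n : ℕ => Iic (t - ((n : ℝ) + 1)⁻¹) := by
    intro n m hnm
    apply Iic_subset_Iic.mpr
    have h1 : ((m : ℝ) + 1)⁻¹ ≤ ((n : ℝ) + 1)⁻¹ := by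
      gcongr <;> exact_mod_cast hnm
    linarith
  rw [hU, hmono.directed_le.measure_iUnion, hmono.directed_le.measure_iUnion]
  exact iSup_mono fun n => h _

lemma claimA {α β : Measure ℝ} [IsProbabilityMeasure α] [IsProbabilityMeasure β]
    (h : ∀ x, α (Iic x) ≤ β (Iic x)) (t : ℝ) : β (Ioi t) ≤ α (Ioi t) := by
  rw [← compl_Iic, measure_compl measurableSet_Iic (measure_ne_top _ _),
    measure_compl measurableSet_Iic (measure_ne_top _ _), measure_univ, measure_univ]
  exact tsub_le_tsub_left (h t) 1

lemma cond_eq {Ω : Type*} [MeasurableSpace Ω] (μ : Measure Ω) [IsProbabilityMeasure μ]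
    {K : ℕ} (N : Fin K → Ω → ℝ) (hN : ∀ j, Measurable (N j))
    (hIndep : iIndepFun N μ) (a b : Fin K) (hab : a ≠ b) :
    μ {ω | ∀ j, j ≠ b → N j ω < N b ω}
      = ∫⁻ t, (μ.map (N a)) (Iio t)
          * μ {ω | ∀ j ∈ ({a, b}ᶜ : Finset (Fin K)), N j ω < t} ∂(μ.map (N b)) := by
  classical
  set T : Finset (Fin K) := Finset.univ.erase b with hT
  set V : Ω → ({x // x ∈ T} → ℝ) := fun ω i => N i ω with hV
  have hVmeas : Measurable V := measurable_pi_lambda _ fun i => hN i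
  haveI : IsProbabilityMeasure (μ.map V) := Measure.isProbabilityMeasure_map hVmeas.aemeasurable
  haveI : IsProbabilityMeasure (μ.map (N b)) := Measure.isProbabilityMeasure_map (hN b).aemeasurable
  have hbT : Disjoint ({b} : Finset (Fin K)) T := by
    simp [hT, Finset.disjoint_singleton_left]
  have hIndepBV : IndepFun (N b) V μ := by
    have h := hIndep.indepFun_finset {b} T hbT hN
    exact h.comp (measurable_pi_apply (⟨b, Finset.mem_singleton_self b⟩ :
      {x // x ∈ ({b} : Finset (Fin K))})) measurable_id
  have hmap : μ.map (fun ω => (N b ω, V ω)) = (μ.map (N b)).prod (μ.map V) :=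
    (indepFun_iff_map_prod_eq_prod_map_map (hN b).aemeasurable hVmeas.aemeasurable).mp hIndepBV
  set Eset : Set (ℝ × ({x // x ∈ T} → ℝ)) := {p | ∀ i, p.2 i < p.1} with hE
  have hEmeas : MeasurableSet Eset := by
    have h1 : Eset = ⋂ i, {p : ℝ × ({x // x ∈ T} → ℝ) | p.2 i < p.1} := by
      ext p; simp [hE]
    rw [h1]
    exact MeasurableSet.iInter fun i =>
      measurableSet_lt measurable_snd.eval measurable_fst
  have hpre : {ω | ∀ j, j ≠ b → N j ω < N b ω} = (fun ω => (N b ω, V ω)) ⁻¹' Eset := by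
    ext ω
    simp only [hE, hV, Set.mem_setOf_eq, Set.mem_preimage]
    constructor
    · intro h i
      exact h i (Finset.ne_of_mem_erase i.2)
    · intro h j hj
      exact h ⟨j, Finset.mem_erase.mpr ⟨hj, Finset.mem_univ j⟩⟩
  have key : ∀ t : ℝ, (μ.map V) (Prod.mk t ⁻¹' Eset)
      = (μ.map (N a)) (Iio t)
        * μ {ω | ∀ j ∈ ({a, b}ᶜ : Finset (Fin K)), N j ω < t} := by
    intro t
    set Sc : Finset (Fin K) := ({a, b}ᶜ : Finset (Fin K)) with hSc
    set R : Ω → ({x // x ∈ Sc} → ℝ) := fun ω i => N i ω with hR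
    have hRmeas : Measurable R := measurable_pi_lambda _ fun i => hN i
    have hslice : Prod.mk t ⁻¹' Eset = {v : {x // x ∈ T} → ℝ | ∀ i, v i < t} := rfl
    have hsm : MeasurableSet {v : {x // x ∈ T} → ℝ | ∀ i, v i < t} := by
      have h1 : {v : {x // x ∈ T} → ℝ | ∀ i, v i < t} =
          ⋂ i, {v : {x // x ∈ T} → ℝ | v i < t} := by ext v; simp
      rw [h1]
      exact MeasurableSet.iInter fun i =>
        measurableSet_lt (measurable_pi_apply i) measurable_const
    rw [hslice, Measure.map_apply hVmeas hsm]
    have hsplit : V ⁻¹' {v | ∀ i, v i < t}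
        = (N a ⁻¹' Iio t) ∩ (R ⁻¹' {v : {x // x ∈ Sc} → ℝ | ∀ i, v i < t}) := by
      ext ω
      simp only [hV, hR, Set.mem_preimage, Set.mem_setOf_eq, Set.mem_inter_iff, mem_Iio]
      constructor
      · intro h
        refine ⟨h ⟨a, Finset.mem_erase.mpr ⟨hab, Finset.mem_univ a⟩⟩, fun i => ?_⟩
        have hib : (i : Fin K) ≠ b := by
          have := i.2
          simp only [hSc, Finset.mem_compl, Finset.mem_insert, Finset.mem_singleton] at this
          tauto
        exact h ⟨i, Finset.mem_erase.mpr ⟨hib, Finset.mem_univ _⟩⟩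
      · rintro ⟨h1, h2⟩ i
        by_cases hia : (i : Fin K) = a
        · rw [hia]; exact h1
        · have hib : (i : Fin K) ≠ b := Finset.ne_of_mem_erase i.2
          have : (i : Fin K) ∈ Sc := by
            simp only [hSc, Finset.mem_compl, Finset.mem_insert, Finset.mem_singleton]
            tauto
          exact h2 ⟨i, this⟩
    have haSc : Disjoint ({a} : Finset (Fin K)) Sc := by
      simp [hSc, Finset.disjoint_singleton_left]
    have hIndepAR : IndepFun (N a) R μ := by
      have h := hIndep.indepFun_finset {a} Sc haSc hN
      exact h.comp (measurable_pi_apply (⟨a, Finset.mem_singleton_self a⟩ :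
        {x // x ∈ ({a} : Finset (Fin K))})) measurable_id
    have hscm : MeasurableSet {v : {x // x ∈ Sc} → ℝ | ∀ i, v i < t} := by
      have h1 : {v : {x // x ∈ Sc} → ℝ | ∀ i, v i < t} =
          ⋂ i, {v : {x // x ∈ Sc} → ℝ | v i < t} := by ext v; simp
      rw [h1]
      exact MeasurableSet.iInter fun i =>
        measurableSet_lt (measurable_pi_apply i) measurable_const
    rw [hsplit, hIndepAR.measure_inter_preimage_eq_mul _ _ measurableSet_Iio hscm,
      Measure.map_apply (hN a) measurableSet_Iio]
    congr 1
    congr 1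
    ext ω
    simp only [hR, Set.mem_preimage, Set.mem_setOf_eq]
    constructor
    · intro h j hj; exact h ⟨j, hj⟩
    · intro h i; exact h i i.2
  rw [hpre, ← Measure.map_apply ((hN b).prodMk hVmeas) hEmeas, hmap,
    Measure.prod_apply hEmeas]
  exact lintegral_congr fun t => key t

lemma step2 {Ω : Type*} [MeasurableSpace Ω] (μ : Measure Ω) [IsProbabilityMeasure μ]
    {K : ℕ} (N : Fin K → Ω → ℝ) (hN : ∀ j, Measurable (N j)) (S : Finset (Fin K))
    (α β : Measure ℝ) [IsProbabilityMeasure α] [IsProbabilityMeasure β]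
    (hup : ∀ t, β (Ioi t) ≤ α (Ioi t)) :
    ∫⁻ t, β (Iio t) * μ {ω | ∀ j ∈ S, N j ω < t} ∂β
      ≤ ∫⁻ t, β (Iio t) * μ {ω | ∀ j ∈ S, N j ω < t} ∂α := by
  classical
  set A : Set ((ℝ × Ω) × ℝ) := {q | q.1.1 < q.2 ∧ ∀ j ∈ S, N j q.1.2 < q.2} with hA
  have hAmeas : MeasurableSet A := by
    have h1 : A = {q : (ℝ × Ω) × ℝ | q.1.1 < q.2}
        ∩ ⋂ j ∈ S, {q : (ℝ × Ω) × ℝ | N j q.1.2 < q.2} := by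
      ext q; simp [hA]
    rw [h1]
    exact (measurableSet_lt (measurable_fst.comp measurable_fst) measurable_snd).inter
      (MeasurableSet.biInter S.countable_toSet fun j _ =>
        measurableSet_lt ((hN j).comp (measurable_snd.comp measurable_fst)) measurable_snd)
  have key : ∀ γ : Measure ℝ, IsProbabilityMeasure γ →
      ∫⁻ t, β (Iio t) * μ {ω | ∀ j ∈ S, N j ω < t} ∂γ
        = ∫⁻ p : ℝ × Ω, γ (Ioi (S.fold max p.1 fun j => N j p.2)) ∂(β.prod μ) := by
    intro γ hγ
    have h1 := Measure.prod_apply_symm (μ := β.prod μ) (ν := γ) hAmeas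
    have h2 := Measure.prod_apply (μ := β.prod μ) (ν := γ) hAmeas
    have e1 : ∀ t : ℝ, (fun x => (x, t)) ⁻¹' A
        = Iio t ×ˢ {ω | ∀ j ∈ S, N j ω < t} := by
      intro t; ext p
      simp [hA, Set.mem_prod, and_comm]
    have e2 : ∀ p : ℝ × Ω, Prod.mk p ⁻¹' A = Ioi (S.fold max p.1 fun j => N j p.2) := by
      intro p; ext t
      simp [hA, Finset.fold_max_lt, mem_Ioi]
    calc ∫⁻ t, β (Iio t) * μ {ω | ∀ j ∈ S, N j ω < t} ∂γ
        = ∫⁻ t, (β.prod μ) ((fun x => (x, t)) ⁻¹' A) ∂γ := by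
          refine lintegral_congr fun t => ?_
          rw [e1 t, Measure.prod_prod]
      _ = ((β.prod μ).prod γ) A := h1.symm
      _ = ∫⁻ p : ℝ × Ω, γ (Prod.mk p ⁻¹' A) ∂(β.prod μ) := h2
      _ = ∫⁻ p : ℝ × Ω, γ (Ioi (S.fold max p.1 fun j => N j p.2)) ∂(β.prod μ) :=
          lintegral_congr fun p => by rw [e2 p]
  rw [key β ‹_›, key α ‹_›]
  exact lintegral_mono fun p => hup _

/-- For independent random variables `N 1, ..., N K`, if the CDF of `N j1` is pointwise at most
the CDF of `N j2`, then `N j1` is more likely than `N j2` to strictly exceed all other variables. -/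
theorem prob_argmax_mono_of_cdf_le {Ω : Type*} [MeasurableSpace Ω] (μ : Measure Ω)
    [IsProbabilityMeasure μ] {K : ℕ} (N : Fin K → Ω → ℝ)
    (hN : ∀ j, Measurable (N j))
    (hIndep : iIndepFun N μ)
    (j1 j2 : Fin K) (hne : j1 ≠ j2)
    (hCDF : ∀ x : ℝ, μ {ω | N j1 ω ≤ x} ≤ μ {ω | N j2 ω ≤ x}) :
    μ {ω | ∀ j, j ≠ j1 → N j ω < N j1 ω} ≥ μ {ω | ∀ j, j ≠ j2 → N j ω < N j2 ω} := by
  classical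
  set α := μ.map (N j1) with hα
  set β := μ.map (N j2) with hβ
  haveI : IsProbabilityMeasure α := Measure.isProbabilityMeasure_map (hN j1).aemeasurable
  haveI : IsProbabilityMeasure β := Measure.isProbabilityMeasure_map (hN j2).aemeasurable
  have hIic : ∀ x, α (Iic x) ≤ β (Iic x) := by
    intro x
    rw [hα, hβ, Measure.map_apply (hN j1) measurableSet_Iic,
      Measure.map_apply (hN j2) measurableSet_Iic]
    exact hCDF x
  have hIoi : ∀ t, β (Ioi t) ≤ α (Ioi t) := claimA hIic
  have hIio : ∀ t, α (Iio t) ≤ β (Iio t) := claimB hIic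
  have e2 := cond_eq μ N hN hIndep j1 j2 hne
  have e1 := cond_eq μ N hN hIndep j2 j1 hne.symm
  rw [Finset.pair_comm j2 j1] at e1
  rw [ge_iff_le, e1, e2]
  calc ∫⁻ t, α (Iio t) * μ {ω | ∀ j ∈ ({j1, j2}ᶜ : Finset (Fin K)), N j ω < t} ∂β
      ≤ ∫⁻ t, β (Iio t) * μ {ω | ∀ j ∈ ({j1, j2}ᶜ : Finset (Fin K)), N j ω < t} ∂β :=
        lintegral_mono fun t => mul_le_mul_left (hIio t) _
    _ ≤ ∫⁻ t, β (Iio t) * μ {ω | ∀ j ∈ ({j1, j2}ᶜ : Finset (Fin K)), N j ω < t} ∂α :=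
        step2 μ N hN _ α β hIoi
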